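/- Let Q be a finite acyclic quiver and R a quasi-Frobenius ring. A representation M ∈ Rep(Q,R) is RI-fibrant if and only if M has the following extension property: for every morphism ι : X → Y in Rep(Q,R) such that for each vertex j the component ι_j : X_j → Y_j is injective and a stable equivalence of R-modules, and for every morphism q : X → M, there exists a morphism h : Y → M in Rep(Q,R) with h ∘ ι = q. -/

import Mathlib

open CategoryTheory CategoryTheory.Limits

/-- An `R`-linear map factors through a projective `R`-module. -/
def FactorsThroughProjective (R : Type) [Ring R] {M N : Type} [AddCommGroup M] [Module R M]
    [AddCommGroup N] [Module R N] (f : M →ₗ[R] N) : Prop :=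
  ∃ (P : Type) (_ : AddCommGroup P) (_ : Module R P) (_ : Module.Projective R P)
    (a : M →ₗ[R] P) (b : P →ₗ[R] N), b ∘ₗ a = f

/-- An `R`-linear map is a stable equivalence if it becomes an isomorphism in the stable
module category: there is `g` in the other direction such that `g ∘ f - id` and `f ∘ g - id`
each factor through a projective module. -/
def IsStableEquiv (R : Type) [Ring R] {M N : Type} [AddCommGroup M] [Module R M]
    [AddCommGroup N] [Module R N] (f : M →ₗ[R] N) : Prop :=
  ∃ g : N →ₗ[R] M,
    FactorsThroughProjective R (g ∘ₗ f - LinearMap.id) ∧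
    FactorsThroughProjective R (f ∘ₗ g - LinearMap.id)

/-- A quasi-Frobenius ring: left and right Noetherian, and injective over itself
as a left and as a right module. -/
class IsQuasiFrobenius (R : Type) [Ring R] : Prop where
  noetherian_left : IsNoetherianRing R
  noetherian_right : IsNoetherianRing Rᵐᵒᵖ
  selfInjective_left : Module.Injective R R
  selfInjective_right : Module.Injective Rᵐᵒᵖ Rᵐᵒᵖ

/-- The category of representations of a quiver `V` over a ring `R`:
functors from the free path category on `V` to `R`-modules. -/
abbrev QuivRep (R : Type) [Ring R] (V : Type) [Quiver.{1} V] : Type _ :=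
  Paths V ⥤ ModuleCat.{0} R

namespace QuivRep

variable {R : Type} [Ring R] {V : Type} [Quiver.{1} V]

/-- The `R`-module of a representation at a vertex `j`. -/
abbrev vtx (M : QuivRep R V) (j : V) : ModuleCat R := M.obj ((Paths.of V).obj j)

/-- The structure map of a representation along an arrow `a : i ⟶ j`. -/
abbrev arrowMap (M : QuivRep R V) {i j : V} (a : i ⟶ j) : M.vtx i ⟶ M.vtx j :=
  M.map ((Paths.of V).map a)

/-- The component at a vertex `j` of a morphism of representations. -/
abbrev app {M N : QuivRep R V} (f : M ⟶ N) (j : V) : ↥(M.vtx j) →ₗ[R] ↥(N.vtx j) := (f.app ((Paths.of V).obj j)).hom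

/-- A representation is monic if, at each vertex `j`, the natural map
`⊕_{a : i ⟶ j} M_i → M_j`, `(x_a) ↦ Σ_a m_a (x_a)`, is injective. -/
def IsMonic (M : QuivRep R V) : Prop :=
  ∀ j : V,
    letI : DecidableEq (Σ i : V, i ⟶ j) := Classical.decEq _
    Function.Injective
      (DirectSum.toModule R (Σ i : V, i ⟶ j) (M.vtx j)
        (fun a => ((M.arrowMap a.2).hom : ↥(M.vtx a.1) →ₗ[R] ↥(M.vtx j))))

/-- A representation is RI-fibrant if, at each vertex `j`, the natural map
`M_j → ∏_{a : j ⟶ i} M_i`, `x ↦ (m_a x)_a`, is surjective. -/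
def IsRIFibrant (M : QuivRep R V) : Prop :=
  ∀ j : V,
    Function.Surjective
      (LinearMap.pi
        (fun a : Σ i : V, (j ⟶ i) => ((M.arrowMap a.2).hom : ↥(M.vtx j) →ₗ[R] ↥(M.vtx a.1))))

end QuivRep

/-- A quiver is finite and acyclic: finitely many vertices and arrows, and the only
paths from a vertex to itself are trivial. -/
def IsFiniteAcyclic (V : Type) [Quiver.{1} V] : Prop :=
  Nonempty (Fintype V) ∧ (∀ i j : V, Nonempty (Fintype (i ⟶ j))) ∧
    ∀ (i : V) (p : Quiver.Path i i), p.length = 0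


section AuxModuleLemmas
variable {R : Type} [Ring R]

variable {R : Type} [Ring R]

theorem baer_self (h : Module.Injective R R) : Module.Baer R R := by
  intro I g
  obtain ⟨h', hh⟩ := h.out I.subtype (Submodule.injective_subtype I) g
  exact ⟨h', fun x mem => hh ⟨x, mem⟩⟩

theorem injective_of_retract {P M : Type} [AddCommGroup P] [Module R P] [AddCommGroup M]
    [Module R M] (i : P →ₗ[R] M) (s : M →ₗ[R] P) (hsi : s ∘ₗ i = LinearMap.id)
    (hM : Module.Injective R M) : Module.Injective R P := by
  constructor
  intro X Y _ _ _ _ f hf g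
  obtain ⟨h, hh⟩ := hM.out f hf (i ∘ₗ g)
  refine ⟨s ∘ₗ h, fun x => ?_⟩
  have := hh x
  simp only [LinearMap.comp_apply] at this ⊢
  rw [this, ← LinearMap.comp_apply s i, hsi, LinearMap.id_apply]

theorem baer_finsupp (hN : IsNoetherianRing R) (hR : Module.Baer R R) (κ : Type) :
    Module.Baer R (κ →₀ R) := by
  intro I g
  obtain ⟨s, hs⟩ := IsNoetherian.noetherian I
  classical
  set T : Finset κ := s.attach.biUnion
    (fun x => (g ⟨x.1, by rw [← hs]; exact Submodule.subset_span x.2⟩).support) with hT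
  have key : ∀ x (hx : x ∈ Submodule.span R (s : Set R)), ∀ (hxI : x ∈ I), ∀ k, k ∉ T →
      g ⟨x, hxI⟩ k = 0 := by
    intro x hx
    induction hx using Submodule.span_induction with
    | mem x hxs =>
        intro hxI k hk
        have : k ∉ (g ⟨x, by rw [← hs]; exact Submodule.subset_span hxs⟩).support := by
          intro hmem
          exact hk (Finset.mem_biUnion.2 ⟨⟨x, hxs⟩, Finset.mem_attach _ _, hmem⟩)
        simpa using Finsupp.notMem_support_iff.1 this
    | zero =>
        intro h0 k hk
        have : (⟨0, h0⟩ : I) = 0 := rfl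
        rw [this, map_zero]; rfl
    | add x y hx hy ihx ihy =>
        intro hxy k hk
        have hxI : x ∈ I := by rw [← hs]; exact hx
        have hyI : y ∈ I := by rw [← hs]; exact hy
        have : (⟨x + y, hxy⟩ : I) = ⟨x, hxI⟩ + ⟨y, hyI⟩ := rfl
        rw [this, map_add, Finsupp.add_apply, ihx hxI k hk, ihy hyI k hk, add_zero]
    | smul r x hx ih =>
        intro hrx k hk
        have hxI : x ∈ I := by rw [← hs]; exact hx
        have : (⟨r • x, hrx⟩ : I) = r • ⟨x, hxI⟩ := rfl
        rw [this, map_smul, Finsupp.smul_apply, ih hxI k hk, smul_zero]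
  have hsupp : ∀ (y : I) (k : κ), k ∉ T → g y k = 0 := by
    intro y k hk
    have hy : (y : R) ∈ Submodule.span R (s : Set R) := by rw [hs]; exact y.2
    exact key y hy y.2 k hk
  choose e he using fun k => hR I ((Finsupp.lapply k) ∘ₗ g)
  refine ⟨∑ k ∈ T, (Finsupp.lsingle k) ∘ₗ (e k), fun x mem => ?_⟩
  ext k
  rw [LinearMap.sum_apply]
  simp only [LinearMap.comp_apply, Finsupp.lsingle_apply]
  rw [Finsupp.finset_sum_apply]
  simp only [Finsupp.single_apply]
  rw [Finset.sum_ite_eq' T k (fun k' => e k' x)]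
  by_cases hkT : k ∈ T
  · rw [if_pos hkT]
    have := he k x mem
    simpa using this
  · rw [if_neg hkT]
    exact (hsupp ⟨x, mem⟩ k hkT).symm

theorem injective_of_projective (hN : IsNoetherianRing R) (hRinj : Module.Injective R R)
    {P : Type} [AddCommGroup P] [Module R P] (hP : Module.Projective R P) :
    Module.Injective R P := by
  obtain ⟨s, hs⟩ := hP.out
  have h1 : Module.Baer R R := by
    intro I g
    obtain ⟨h', hh⟩ := hRinj.out I.subtype (Submodule.injective_subtype I) g
    exact ⟨h', fun x mem => hh ⟨x, mem⟩⟩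
  exact injective_of_retract s (Finsupp.linearCombination R id) (LinearMap.ext hs)
    (baer_finsupp hN h1 P).injective

theorem stable_lifting (hN : IsNoetherianRing R) (hRinj : Module.Injective R R)
    {X Y : Type} {A B : Type*} [AddCommGroup X] [Module R X] [AddCommGroup Y] [Module R Y]
    [AddCommGroup A] [Module R A] [AddCommGroup B] [Module R B]
    (ι : X →ₗ[R] Y) (hinj : Function.Injective ι) (hst : IsStableEquiv R ι)
    (p : A →ₗ[R] B) (hp : Function.Surjective p) (f : X →ₗ[R] A) (g : Y →ₗ[R] B)
    (hsq : p ∘ₗ f = g ∘ₗ ι) :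
    ∃ h : Y →ₗ[R] A, h ∘ₗ ι = f ∧ p ∘ₗ h = g := by
  obtain ⟨g', ⟨P, _, _, hP, α, β, hβα⟩, ⟨Q, _, _, hQ, γ, δ, hδγ⟩⟩ := hst
  obtain ⟨ᾱ, hᾱ⟩ := (injective_of_projective hN hRinj hP).out ι hinj α
  set r : Y →ₗ[R] X := g' - β ∘ₗ ᾱ with hrdef
  have hr : r ∘ₗ ι = LinearMap.id := by
    ext x
    have h1 : β (α x) = g' (ι x) - x := by
      have := congrArg (fun (m : X →ₗ[R] X) => m x) hβα
      simpa using this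
    simp [hrdef, hᾱ x, h1]
  set e : Y →ₗ[R] Y := LinearMap.id - ι ∘ₗ r with hedef
  have heι : ∀ x, e (ι x) = 0 := by
    intro x
    have : r (ι x) = x := by
      have := congrArg (fun (m : X →ₗ[R] X) => m x) hr; simpa using this
    simp [hedef, this]
  set π := (LinearMap.range ι).mkQ with hπdef
  have hπι : ∀ x, π (ι x) = 0 := by
    intro x
    simp [hπdef, Submodule.Quotient.mk_eq_zero, LinearMap.mem_range]
  have heker : LinearMap.range ι ≤ LinearMap.ker e := by
    rintro _ ⟨x, rfl⟩; exact heι x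
  set k := (LinearMap.range ι).liftQ e heker with hkdef
  have hkπ : ∀ y, k (π y) = e y := by
    intro y; rfl
  have hπk : ∀ c, π (k c) = c := by
    intro c
    obtain ⟨y, rfl⟩ := (LinearMap.range ι).mkQ_surjective c
    show π (k (π y)) = π y
    rw [hkπ]
    simp only [hedef, LinearMap.sub_apply, LinearMap.id_apply, LinearMap.comp_apply, map_sub]
    rw [hπι]; simp
  -- C := Y ⧸ range ι is projective
  have hπδγ : ∀ y, π (δ (γ y)) = - π y := by
    intro y
    have := congrArg (fun (m : Y →ₗ[R] Y) => π (m y)) hδγ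
    simp only [LinearMap.comp_apply, LinearMap.sub_apply, LinearMap.id_apply, map_sub] at this
    rw [hπι] at this
    simpa using this
  have hCproj : Module.Projective R (Y ⧸ LinearMap.range ι) := by
    haveI := hQ
    apply Module.Projective.of_split (M := Q) (γ ∘ₗ k) (-(π ∘ₗ δ))
    refine LinearMap.ext fun c => ?_
    simp only [LinearMap.comp_apply, LinearMap.neg_apply, LinearMap.id_apply]
    rw [hπδγ (k c), hπk c, neg_neg]
  have hgeker : LinearMap.range ι ≤ LinearMap.ker (g ∘ₗ e) := by
    rintro _ ⟨x, rfl⟩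
    simp only [LinearMap.mem_ker, LinearMap.comp_apply]
    rw [heι]; simp
  set u := (LinearMap.range ι).liftQ (g ∘ₗ e) hgeker with hudef
  have huπ : ∀ y, u (π y) = g (e y) := fun y => rfl
  obtain ⟨v, hv⟩ := Module.projective_lifting_property (h := hCproj) p u hp
  refine ⟨f ∘ₗ r + v ∘ₗ π, ?_, ?_⟩
  · ext x
    have hrι : r (ι x) = x := by
      have := congrArg (fun (m : X →ₗ[R] X) => m x) hr; simpa using this
    simp only [LinearMap.add_apply, LinearMap.comp_apply, hrι, hπι, map_zero, add_zero]
  · ext y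
    have hpf : ∀ x, p (f x) = g (ι x) := by
      intro x
      have := congrArg (fun (m : X →ₗ[R] B) => m x) hsq; simpa using this
    have hpv : ∀ c, p (v c) = u c := by
      intro c
      have := congrArg (fun (m : _ →ₗ[R] B) => m c) hv; simpa using this
    simp only [LinearMap.add_apply, LinearMap.comp_apply, map_add]
    rw [hpf, hpv, huπ]
    simp [hedef]

end AuxModuleLemmas
namespace QuivRep
variable {R : Type} [Ring R] {V : Type} [Quiver.{1} V]

/-- Build a morphism of quiver representations from vertex components commuting with arrows. -/
def mkHom (F G : QuivRep R V) (c : ∀ j : V, ↥(F.vtx j) →ₗ[R] ↥(G.vtx j))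
    (h : ∀ {i k : V} (a : i ⟶ k), c k ∘ₗ ((F.arrowMap a).hom : ↥(F.vtx i) →ₗ[R] ↥(F.vtx k))
      = ((G.arrowMap a).hom : _ →ₗ[R] _) ∘ₗ c i) : F ⟶ G where
  app j := ModuleCat.ofHom (c j)
  naturality {i k} p := by
    let d : ∀ b : Paths V, F.obj b ⟶ G.obj b := fun b => ModuleCat.ofHom (c b)
    have hd : ∀ {u v : V} (q : u ⟶ v), F.map ((Paths.of V).map q) ≫ d ((Paths.of V).obj v)
        = d ((Paths.of V).obj u) ≫ G.map ((Paths.of V).map q) := fun q => ModuleCat.hom_ext (h q)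
    show F.map p ≫ d k = d i ≫ G.map p
    refine Paths.induction_fixed_source
      (P := fun {b} (f : i ⟶ b) => F.map f ≫ d b = d i ≫ G.map f) ?_ ?_ p
    · rw [F.map_id, G.map_id, Category.id_comp, Category.comp_id]
    · intro u v p q hp
      rw [F.map_comp, G.map_comp, Category.assoc, hd q, ← Category.assoc, hp, Category.assoc]

@[simp] lemma mkHom_app (F G : QuivRep R V) (c) (h) (j : V) :
    QuivRep.app (mkHom F G c h) j = c j := rfl

end QuivRep

section FreeRep
variable {V : Type} [Quiver.{1} V]

/-- Split off the first arrow of a nontrivial path. -/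
def firstSplit {j : V} : ∀ {i : V}, Quiver.Path j i → Option (Σ k : V, (j ⟶ k) × Quiver.Path k i)
  | _, .nil => none
  | _, .cons .nil a => some ⟨_, a, .nil⟩
  | _, .cons (.cons p b) a =>
      (firstSplit (.cons p b)).map fun x => ⟨x.1, x.2.1, x.2.2.cons a⟩

theorem firstSplit_cons {j i i' : V} (p : Quiver.Path j i) (hp : p.length ≠ 0) (a : i ⟶ i') :
    firstSplit (p.cons a) = (firstSplit p).map fun x => ⟨x.1, x.2.1, x.2.2.cons a⟩ := by
  cases p with
  | nil => simp at hp
  | cons p b => rfl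

theorem firstSplit_isSome {j : V} : ∀ {i : V} (p : Quiver.Path j i), p.length ≠ 0 →
    ∃ x, firstSplit p = some x := by
  intro i p
  induction p with
  | nil => intro h; simp at h
  | cons p a ih =>
      intro _
      cases p with
      | nil => exact ⟨_, rfl⟩
      | cons p' b =>
          obtain ⟨x, hx⟩ := ih (by simp)
          refine ⟨⟨x.1, x.2.1, x.2.2.cons a⟩, ?_⟩
          rw [firstSplit_cons _ (by simp) a, hx, Option.map_some]

variable {R : Type} [Ring R]

/-- The value in `M` associated to a path out of `j`, given prescribed values `n` for the
arrows out of `j`. -/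
noncomputable def pathVal (M : QuivRep R V) {j : V}
    (n : ∀ a : Σ k : V, (j ⟶ k), ↥(M.vtx a.1)) {i : V} (p : Quiver.Path j i) : ↥(M.vtx i) :=
  match firstSplit p with
  | none => 0
  | some x => ((M.map (show (Paths.of V).obj x.1 ⟶ (Paths.of V).obj i from x.2.2)).hom :
      ↥(M.vtx x.1) →ₗ[R] ↥(M.vtx i)) (n ⟨x.1, x.2.1⟩)

theorem pathVal_toPath (M : QuivRep R V) {j : V}
    (n : ∀ a : Σ k : V, (j ⟶ k), ↥(M.vtx a.1)) {k : V} (a : j ⟶ k) :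
    pathVal M n a.toPath = n ⟨k, a⟩ := by
  show pathVal M n (Quiver.Path.nil.cons a) = n ⟨k, a⟩
  unfold pathVal
  show ((M.map (𝟙 ((Paths.of V).obj k))).hom : ↥(M.vtx k) →ₗ[R] ↥(M.vtx k)) (n ⟨k, a⟩) = n ⟨k, a⟩
  rw [M.map_id]
  rfl

theorem pathVal_cons (M : QuivRep R V) {j : V}
    (n : ∀ a : Σ k : V, (j ⟶ k), ↥(M.vtx a.1)) {i i' : V} (p : Quiver.Path j i)
    (hp : p.length ≠ 0) (a : i ⟶ i') :
    pathVal M n (p.cons a) = ((M.arrowMap a).hom : ↥(M.vtx i) →ₗ[R] ↥(M.vtx i')) (pathVal M n p) := by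
  obtain ⟨x, hx⟩ := firstSplit_isSome p hp
  unfold pathVal
  rw [firstSplit_cons p hp a, hx, Option.map_some]
  show ((M.map (show (Paths.of V).obj x.1 ⟶ (Paths.of V).obj i' from x.2.2.cons a)).hom :
      ↥(M.vtx x.1) →ₗ[R] ↥(M.vtx i')) (n ⟨x.1, x.2.1⟩) = _
  have hcomp : (show (Paths.of V).obj x.1 ⟶ (Paths.of V).obj i' from x.2.2.cons a)
      = (show (Paths.of V).obj x.1 ⟶ (Paths.of V).obj i from x.2.2) ≫ (Paths.of V).map a := by
    show Quiver.Path.cons _ _ = Quiver.Path.comp _ _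
    rfl
  rw [hcomp, M.map_comp]
  rfl

end FreeRep

/-- Paths in `V`, as a type in `Type` (`Quiver.Path` now lives in `Type 1`). -/
inductive SPath {V : Type} [Quiver.{1} V] [∀ a b : V, Small.{0} (a ⟶ b)] (a : V) : V → Type
  | nil : SPath a a
  | cons : ∀ {b c : V}, SPath a b → Shrink.{0} (b ⟶ c) → SPath a c

namespace SPath
variable {V : Type} [Quiver.{1} V] [∀ a b : V, Small.{0} (a ⟶ b)]

def length {a : V} : ∀ {b : V}, SPath a b → ℕ
  | _, nil => 0
  | _, cons p _ => p.length + 1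

noncomputable def toQ {a : V} : ∀ {b : V}, SPath a b → Quiver.Path a b
  | _, nil => Quiver.Path.nil
  | _, cons p e => p.toQ.cons ((equivShrink _).symm e)

@[simp] theorem length_nil {a : V} : (nil : SPath a a).length = 0 := rfl

@[simp] theorem length_cons {a b c : V} (p : SPath a b) (e : Shrink.{0} (b ⟶ c)) :
    (cons p e).length = p.length + 1 := rfl

@[simp] theorem toQ_length {a b : V} (p : SPath a b) : p.toQ.length = p.length := by
  induction p with
  | nil => rfl
  | cons p e ih => simp [toQ, ih]

theorem eq_of_length_zero {a b : V} (p : SPath a b) (h : p.length = 0) : a = b := by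
  cases p with
  | nil => rfl
  | cons p e => simp at h

theorem eq_nil_of_length_zero {a : V} (p : SPath a a) (h : p.length = 0) : p = nil := by
  cases p with
  | nil => rfl
  | cons p e => simp at h

end SPath

section FreeRepDef
variable (R : Type) [Ring R] {V : Type} [Quiver.{1} V] [∀ a b : V, Small.{0} (a ⟶ b)]

/-- The free representation generated at vertex `j`. -/
noncomputable def freeRep (j : V) : QuivRep R V :=
  Paths.lift
    { obj := fun i => ModuleCat.of R (SPath j i →₀ R)
      map := fun {i i'} a => ModuleCat.ofHom (Finsupp.lmapDomain R R (fun p => SPath.cons p (equivShrink (i ⟶ i') a))) }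

/-- The subrepresentation of the free representation spanned by nontrivial paths. -/
noncomputable def freeRepPos (j : V) : QuivRep R V :=
  Paths.lift
    { obj := fun i => ModuleCat.of R ({p : SPath j i // p.length ≠ 0} →₀ R)
      map := fun {i i'} a => ModuleCat.ofHom (Finsupp.lmapDomain R R
        (fun p => ⟨SPath.cons p.1 (equivShrink (i ⟶ i') a), Nat.succ_ne_zero _⟩)) }

theorem freeRep_arrowMap (j : V) {i i' : V} (a : i ⟶ i') :
    (((freeRep R j).arrowMap a).hom : ↥((freeRep R j).vtx i) →ₗ[R] ↥((freeRep R j).vtx i'))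
      = Finsupp.lmapDomain R R (fun p => SPath.cons p (equivShrink (i ⟶ i') a)) :=
  congrArg ModuleCat.Hom.hom (Paths.lift_toPath _ a)

theorem freeRepPos_arrowMap (j : V) {i i' : V} (a : i ⟶ i') :
    (((freeRepPos R j).arrowMap a).hom : ↥((freeRepPos R j).vtx i) →ₗ[R] ↥((freeRepPos R j).vtx i'))
      = Finsupp.lmapDomain R R (fun p => ⟨SPath.cons p.1 (equivShrink (i ⟶ i') a), Nat.succ_ne_zero _⟩) :=
  congrArg ModuleCat.Hom.hom (Paths.lift_toPath _ a)

/-- The inclusion of the nontrivial-path representation into the free representation. -/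
noncomputable def freeRepIncl (j : V) : freeRepPos R j ⟶ freeRep R j :=
  QuivRep.mkHom _ _ (fun i => Finsupp.lmapDomain R R Subtype.val) (by
    intro i k a
    rw [freeRep_arrowMap, freeRepPos_arrowMap]
    apply Finsupp.lhom_ext
    intro p r
    erw [LinearMap.comp_apply, LinearMap.comp_apply]
    erw [Finsupp.lmapDomain_apply, Finsupp.lmapDomain_apply, Finsupp.lmapDomain_apply,
      Finsupp.lmapDomain_apply, Finsupp.mapDomain_single, Finsupp.mapDomain_single,
      Finsupp.mapDomain_single, Finsupp.mapDomain_single]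
    rfl)

theorem freeRepIncl_app (j : V) (i : V) :
    QuivRep.app (freeRepIncl R j) i = Finsupp.lmapDomain R R Subtype.val := rfl

end FreeRepDef

section StableIncl
variable {R : Type} [Ring R] {V : Type} [Quiver.{1} V] [∀ a b : V, Small.{0} (a ⟶ b)]

theorem factorsThroughProjective_zero {M N : Type} [AddCommGroup M] [Module R M]
    [AddCommGroup N] [Module R N] {f : M →ₗ[R] N} (hf : f = 0) :
    FactorsThroughProjective R f := by
  exact ⟨R, inferInstance, inferInstance, inferInstance, 0, 0, by rw [hf]; ext x; simp⟩

theorem isStableEquiv_subtypeVal (j i : V) :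
    IsStableEquiv R (Finsupp.lmapDomain (α := {p : SPath j i // p.length ≠ 0}) R R
      (Subtype.val : {p : SPath j i // p.length ≠ 0} → SPath j i)) := by
  classical
  set f := Finsupp.lmapDomain (α := {p : SPath j i // p.length ≠ 0}) R R
      (Subtype.val : {p : SPath j i // p.length ≠ 0} → SPath j i) with hf
  set g : (SPath j i →₀ R) →ₗ[R] ({p : SPath j i // p.length ≠ 0} →₀ R) :=
    Finsupp.linearCombination R (fun p : SPath j i =>
      if h : p.length ≠ 0 then Finsupp.single (⟨p, h⟩ : {p : SPath j i // p.length ≠ 0})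
        (1 : R) else 0) with hg
  have hgf : g ∘ₗ f = LinearMap.id := by
    apply Finsupp.lhom_ext
    intro p r
    simp only [LinearMap.comp_apply, hf, Finsupp.lmapDomain_apply, Finsupp.mapDomain_single,
      LinearMap.id_apply, hg]
    rw [Finsupp.linearCombination_single, dif_pos p.2]
    rw [Finsupp.smul_single, smul_eq_mul, mul_one]
  refine ⟨g, factorsThroughProjective_zero (by rw [hgf]; exact LinearMap.ext fun x => sub_self x), ?_⟩
  by_cases hij : i = j
  · subst hij
    refine ⟨R, inferInstance, inferInstance, inferInstance,
      Finsupp.linearCombination R (fun p : SPath i i => if p.length = 0 then (1:R) else 0),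
      -(Finsupp.lsingle SPath.nil), ?_⟩
    apply Finsupp.lhom_ext
    intro p r
    simp only [LinearMap.comp_apply, LinearMap.sub_apply, LinearMap.id_apply,
      LinearMap.neg_apply, hg, hf]
    rw [Finsupp.linearCombination_single, Finsupp.linearCombination_single]
    by_cases hp : p.length = 0
    · obtain rfl := SPath.eq_nil_of_length_zero p hp
      rw [if_pos hp, dif_neg (by simp [hp])]
      simp [Finsupp.lsingle_apply, Finsupp.smul_single]
    · rw [if_neg hp, dif_pos hp]
      simp only [mul_zero, map_zero, neg_zero, smul_eq_mul, mul_one, Finsupp.smul_single,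
        Finsupp.lmapDomain_apply, Finsupp.mapDomain_single]
      simp
  · apply factorsThroughProjective_zero
    apply Finsupp.lhom_ext
    intro p r
    have hp : p.length ≠ 0 := fun h => hij (SPath.eq_of_length_zero p h).symm
    simp only [LinearMap.comp_apply, LinearMap.sub_apply, LinearMap.id_apply, hg, hf,
      LinearMap.zero_apply]
    rw [Finsupp.linearCombination_single, dif_pos hp, Finsupp.smul_single, smul_eq_mul, mul_one,
      Finsupp.lmapDomain_apply, Finsupp.mapDomain_single]
    simp

end StableIncl

section Backward
variable {R : Type} [Ring R] {V : Type} [Quiver.{1} V] [∀ a b : V, Small.{0} (a ⟶ b)]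

/-- The morphism from the nontrivial-path representation to `M` determined by values `n`. -/
noncomputable def freeRepPosHom (M : QuivRep R V) {j : V}
    (n : ∀ a : Σ k : V, (j ⟶ k), ↥(M.vtx a.1)) : freeRepPos R j ⟶ M :=
  QuivRep.mkHom _ _ (fun i => Finsupp.linearCombination R
    (fun p : {p : SPath j i // p.length ≠ 0} => pathVal M n p.1.toQ)) (by
    intro i k a
    rw [freeRepPos_arrowMap]
    apply Finsupp.lhom_ext
    intro p r
    erw [LinearMap.comp_apply, LinearMap.comp_apply]
    erw [Finsupp.lmapDomain_apply, Finsupp.mapDomain_single, Finsupp.linearCombination_single,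
      Finsupp.linearCombination_single]
    have e : (⟨SPath.cons p.1 (equivShrink (i ⟶ k) a), Nat.succ_ne_zero _⟩ :
        {p : SPath j k // p.length ≠ 0}).1.toQ = p.1.toQ.cons a := by
      show p.1.toQ.cons ((equivShrink (i ⟶ k)).symm (equivShrink (i ⟶ k) a)) = _
      rw [Equiv.symm_apply_apply]
    refine (congrArg (fun t => r • pathVal M n t) e).trans ?_
    refine (congrArg (r • ·) (pathVal_cons M n p.1.toQ
      (fun h0 => p.2 ((SPath.toQ_length p.1).symm.trans h0)) a)).trans ?_
    exact (map_smul _ r _).symm)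

theorem isRIFibrant_of_ext (M : QuivRep R V)
    (hext : ∀ (X Y : QuivRep R V) (ι : X ⟶ Y),
      (∀ j : V, Function.Injective (QuivRep.app ι j) ∧ IsStableEquiv R (QuivRep.app ι j)) →
      ∀ q : X ⟶ M, ∃ h : Y ⟶ M, ι ≫ h = q) : M.IsRIFibrant := by
  intro j n
  obtain ⟨h, hq⟩ := hext (freeRepPos R j) (freeRep R j) (freeRepIncl R j)
    (fun i => ⟨Finsupp.mapDomain_injective Subtype.coe_injective,
      isStableEquiv_subtypeVal j i⟩)
    (freeRepPosHom M n)
  refine ⟨QuivRep.app h j (Finsupp.single (SPath.nil : SPath j j) 1), ?_⟩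
  funext a
  rw [LinearMap.pi_apply]
  have hnatL : ((M.arrowMap a.2).hom : ↥(M.vtx j) →ₗ[R] ↥(M.vtx a.1)) ∘ₗ (QuivRep.app h j)
      = (QuivRep.app h a.1) ∘ₗ (((freeRep R j).arrowMap a.2).hom :
          ↥((freeRep R j).vtx j) →ₗ[R] ↥((freeRep R j).vtx a.1)) :=
    congrArg ModuleCat.Hom.hom (h.naturality ((Paths.of V).map a.2)).symm
  refine (LinearMap.congr_fun hnatL _).trans ?_
  show QuivRep.app h a.1 ((((freeRep R j).arrowMap a.2).hom)
    (Finsupp.single (SPath.nil : SPath j j) (1:R))) = n a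
  have h1 : (((freeRep R j).arrowMap a.2).hom : _ →ₗ[R] _) (Finsupp.single (SPath.nil : SPath j j) (1:R))
      = Finsupp.single (SPath.cons (SPath.nil : SPath j j) (equivShrink (j ⟶ a.1) a.2)) 1 := by
    rw [freeRep_arrowMap]
    erw [Finsupp.lmapDomain_apply, Finsupp.mapDomain_single]
  rw [h1]
  have h2 : Finsupp.single (SPath.cons (SPath.nil : SPath j j) (equivShrink (j ⟶ a.1) a.2)) (1:R)
      = (QuivRep.app (freeRepIncl R j) a.1)
        (Finsupp.single (⟨SPath.cons (SPath.nil : SPath j j) (equivShrink (j ⟶ a.1) a.2), by simp⟩ :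
          {p : SPath j a.1 // p.length ≠ 0}) 1) := by
    rw [freeRepIncl_app]
    erw [Finsupp.lmapDomain_apply, Finsupp.mapDomain_single]
    rfl
  rw [h2]
  have h3 : ∀ z, QuivRep.app h a.1 (QuivRep.app (freeRepIncl R j) a.1 z)
      = QuivRep.app (freeRepPosHom M n) a.1 z := fun z =>
    LinearMap.congr_fun
      ((congrArg (fun (t : freeRepPos R j ⟶ M) => QuivRep.app t a.1) hq) :
        QuivRep.app (freeRepIncl R j ≫ h) a.1 = QuivRep.app (freeRepPosHom M n) a.1) z
  refine (h3 _).trans ?_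
  show (Finsupp.linearCombination R
    (fun p : {p : SPath j a.1 // p.length ≠ 0} => pathVal M n p.1.toQ)) _ = n a
  erw [Finsupp.linearCombination_single]
  rw [one_smul]
  simp only [SPath.toQ, Equiv.symm_apply_apply]
  exact pathVal_toPath M n a.2

end Backward


section Forward
variable {R : Type} [Ring R] {V : Type} [Quiver.{1} V]

theorem ext_of_isRIFibrant [IsQuasiFrobenius R] (hV : IsFiniteAcyclic V)
    (M : QuivRep R V) (hM : M.IsRIFibrant) (X Y : QuivRep R V) (ι : X ⟶ Y)
    (hι : ∀ j : V, Function.Injective (QuivRep.app ι j) ∧ IsStableEquiv R (QuivRep.app ι j))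
    (q : X ⟶ M) : ∃ h : Y ⟶ M, ι ≫ h = q := by
  classical
  haveI : Fintype V := Classical.choice hV.1
  set rel : V → V → Prop := fun k j => ∃ p : Quiver.Path j k, p.length ≠ 0 with hrel
  haveI : IsTrans V rel := by
    constructor
    rintro a b c ⟨p, hp⟩ ⟨s, hs⟩
    exact ⟨s.comp p, by
      rw [Quiver.Path.length_comp]
      omega⟩
  haveI : IsIrrefl V rel := by
    constructor
    rintro a ⟨p, hp⟩
    exact hp (hV.2.2 a p)
  have wf : WellFounded rel := Finite.wellFounded_of_trans_of_irrefl rel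
  set F : ∀ j : V, (∀ k : V, rel k j → (↥(Y.vtx k) →ₗ[R] ↥(M.vtx k))) →
      (↥(Y.vtx j) →ₗ[R] ↥(M.vtx j)) := fun j prev =>
    if h : ∃ φ : ↥(Y.vtx j) →ₗ[R] ↥(M.vtx j),
        φ ∘ₗ QuivRep.app ι j = QuivRep.app q j ∧
        ∀ (k : V) (a : j ⟶ k), ((M.arrowMap a).hom : ↥(M.vtx j) →ₗ[R] ↥(M.vtx k)) ∘ₗ φ
            = prev k ⟨a.toPath, by simp [Quiver.Hom.toPath]⟩
              ∘ₗ ((Y.arrowMap a).hom : ↥(Y.vtx j) →ₗ[R] ↥(Y.vtx k))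
    then h.choose else 0 with hF
  set H : ∀ j : V, ↥(Y.vtx j) →ₗ[R] ↥(M.vtx j) := fun j => wf.fix F j with hH
  have inv : ∀ j : V, (H j) ∘ₗ QuivRep.app ι j = QuivRep.app q j ∧
      ∀ (k : V) (a : j ⟶ k), ((M.arrowMap a).hom : ↥(M.vtx j) →ₗ[R] ↥(M.vtx k)) ∘ₗ H j
        = H k ∘ₗ ((Y.arrowMap a).hom : ↥(Y.vtx j) →ₗ[R] ↥(Y.vtx k)) := by
    intro j
    induction j using WellFounded.induction wf with
    | _ j ih =>
      have hex : ∃ φ : ↥(Y.vtx j) →ₗ[R] ↥(M.vtx j),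
          φ ∘ₗ QuivRep.app ι j = QuivRep.app q j ∧
          ∀ (k : V) (a : j ⟶ k), ((M.arrowMap a).hom : ↥(M.vtx j) →ₗ[R] ↥(M.vtx k)) ∘ₗ φ
              = (fun k _ => H k) k (⟨a.toPath, by simp [Quiver.Hom.toPath]⟩ : rel k j)
                ∘ₗ ((Y.arrowMap a).hom : ↥(Y.vtx j) →ₗ[R] ↥(Y.vtx k)) := by
        obtain ⟨φ, hφ1, hφ2⟩ := stable_lifting IsQuasiFrobenius.noetherian_left
          IsQuasiFrobenius.selfInjective_left
          (QuivRep.app ι j) (hι j).1 (hι j).2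
          (LinearMap.pi (fun a : Σ k : V, (j ⟶ k) =>
            ((M.arrowMap a.2).hom : ↥(M.vtx j) →ₗ[R] ↥(M.vtx a.1)))) (hM j)
          (QuivRep.app q j)
          (LinearMap.pi (fun a : Σ k : V, (j ⟶ k) =>
            (H a.1) ∘ₗ ((Y.arrowMap a.2).hom : ↥(Y.vtx j) →ₗ[R] ↥(Y.vtx a.1))))
          (by
            apply LinearMap.ext
            intro x
            funext a
            simp only [LinearMap.comp_apply, LinearMap.pi_apply]
            have hnatι : ((QuivRep.app ι a.1) ∘ₗ ((X.arrowMap a.2).hom :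
                ↥(X.vtx j) →ₗ[R] ↥(X.vtx a.1)))
                = ((Y.arrowMap a.2).hom : ↥(Y.vtx j) →ₗ[R] ↥(Y.vtx a.1)) ∘ₗ QuivRep.app ι j :=
              congrArg ModuleCat.Hom.hom (ι.naturality ((Paths.of V).map a.2))
            have hnatq : ((QuivRep.app q a.1) ∘ₗ ((X.arrowMap a.2).hom :
                ↥(X.vtx j) →ₗ[R] ↥(X.vtx a.1)))
                = ((M.arrowMap a.2).hom : ↥(M.vtx j) →ₗ[R] ↥(M.vtx a.1)) ∘ₗ QuivRep.app q j :=
              congrArg ModuleCat.Hom.hom (q.naturality ((Paths.of V).map a.2))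
            have hrelk : rel a.1 j := ⟨a.2.toPath, by simp [Quiver.Hom.toPath]⟩
            have e1 := LinearMap.congr_fun hnatι x
            have e2 := LinearMap.congr_fun (ih a.1 hrelk).1
              (((X.arrowMap a.2).hom : ↥(X.vtx j) →ₗ[R] ↥(X.vtx a.1)) x)
            have e3 := LinearMap.congr_fun hnatq x
            simp only [LinearMap.comp_apply] at e1 e2 e3
            rw [← e1, e2]
            exact e3.symm)
        refine ⟨φ, hφ1, ?_⟩
        intro k a
        apply LinearMap.ext
        intro y
        have := congrFun (LinearMap.congr_fun hφ2 y) ⟨k, a⟩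
        simpa using this
      have hfix : H j = F j (fun k _ => H k) := wf.fix_eq F j
      have hHj : H j = hex.choose := by
        rw [hfix, hF]
        exact dif_pos hex
      constructor
      · rw [hHj]; exact hex.choose_spec.1
      · intro k a
        rw [hHj]
        exact hex.choose_spec.2 k a
  refine ⟨QuivRep.mkHom Y M H (fun {i k} a => ((inv i).2 k a).symm), ?_⟩
  apply NatTrans.ext
  funext x
  exact ModuleCat.hom_ext (inv x).1

/-- Over a quasi-Frobenius ring and a finite acyclic quiver, a representation `M` is RI-fibrant
if and only if it has the extension property against all morphisms that are pointwise
injective stable equivalences. -/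
theorem isRIFibrant_iff_extensionProperty
    (R : Type) [Ring R] [IsQuasiFrobenius R]
    {V : Type} [Quiver.{1} V] (hV : IsFiniteAcyclic V)
    (M : QuivRep R V) :
    M.IsRIFibrant ↔
      ∀ (X Y : QuivRep R V) (ι : X ⟶ Y),
        (∀ j : V, Function.Injective (QuivRep.app ι j) ∧ IsStableEquiv R (QuivRep.app ι j)) →
        ∀ q : X ⟶ M, ∃ h : Y ⟶ M, ι ≫ h = q := by
  constructor
  · intro hM X Y ι hι q
    exact ext_of_isRIFibrant hV M hM X Y ι hι q
  · intro hext
    haveI : ∀ a b : V, Small.{0} (a ⟶ b) := fun a b => by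
      haveI := Classical.choice (hV.2.1 a b); infer_instance
    exact isRIFibrant_of_ext M hext
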